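/- Let y satisfy 0 < y < π. Then ∫_{x=0}^{π} [π − arctan(√(tan²(x/2)/sin²(y/2) + 1)·tan(y/2))] / √(tan²(x/2)/sin²(y/2) + 1) · sin(x) dx = (4·tan(y/2)/cos²(y/2)) · ∫_{z=y/2}^{π/2} (π − z)·cos²(z) dz. -/

import Mathlib

open Real

/-- The Crofton substitution cos z = cos(x/2)cos(y/2) reduces the area-density
integral (case 0 < y < π) to an elementary integral. -/
theorem crofton_substitution_lt_pi (y : ℝ) (h0 : 0 < y) (h1 : y < π) :
    (∫ x in (0:ℝ)..π,
      (π - Real.arctan (Real.sqrt (Real.tan (x / 2) ^ 2 / Real.sin (y / 2) ^ 2 + 1) *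
          Real.tan (y / 2))) /
        Real.sqrt (Real.tan (x / 2) ^ 2 / Real.sin (y / 2) ^ 2 + 1) * Real.sin x)
    = (4 * Real.tan (y / 2) / Real.cos (y / 2) ^ 2) *
        ∫ z in (y / 2)..(π / 2), (π - z) * Real.cos z ^ 2 := by
  have hpi : (0:ℝ) < π := Real.pi_pos
  set c := Real.cos (y / 2) with hc_def
  set s := Real.sin (y / 2) with hs_def
  have hs : 0 < s := Real.sin_pos_of_pos_of_lt_pi (by linarith) (by linarith)
  have hc : 0 < c := Real.cos_pos_of_mem_Ioo ⟨by linarith, by linarith⟩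
  have hsc : s ^ 2 + c ^ 2 = 1 := Real.sin_sq_add_cos_sq (y / 2)
  have hc1 : c < 1 := by nlinarith
  have ht : Real.tan (y / 2) = s / c := Real.tan_eq_sin_div_cos (y / 2)
  -- the substitution function
  set f : ℝ → ℝ := fun x => Real.arccos (c * Real.cos (x / 2)) with hf_def
  set f' : ℝ → ℝ := fun x =>
    c * Real.sin (x / 2) / (2 * Real.sqrt (1 - (c * Real.cos (x / 2)) ^ 2)) with hf'_def
  have hw : ∀ x : ℝ, -1 < c * Real.cos (x / 2) ∧ c * Real.cos (x / 2) < 1 := by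
    intro x
    have h1 := Real.neg_one_le_cos (x / 2)
    have h2 := Real.cos_le_one (x / 2)
    constructor <;> nlinarith
  have hsqrt_pos : ∀ x : ℝ, 0 < Real.sqrt (1 - (c * Real.cos (x / 2)) ^ 2) := by
    intro x
    apply Real.sqrt_pos.2
    have := (hw x).1; have := (hw x).2
    nlinarith
  have hderiv : ∀ x ∈ Set.uIcc (0:ℝ) π, HasDerivAt f (f' x) x := by
    intro x _
    have hinner : HasDerivAt (fun x : ℝ => c * Real.cos (x / 2))
        (c * (-Real.sin (x / 2) * (1 / 2))) x := by
      have h1 : HasDerivAt (fun x : ℝ => x / 2) (1 / 2) x := by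
        simpa using (hasDerivAt_id x).div_const 2
      exact ((Real.hasDerivAt_cos (x / 2)).comp x h1).const_mul c
    have harccos := Real.hasDerivAt_arccos (ne_of_gt (hw x).1) (ne_of_lt (hw x).2)
    have := harccos.comp x hinner
    refine this.congr_deriv ?_
    simp only [hf'_def]
    ring
  have hf'cont : ContinuousOn f' (Set.uIcc (0:ℝ) π) := by
    apply ContinuousOn.div
    · fun_prop
    · fun_prop
    · intro x _
      have := hsqrt_pos x
      positivity
  have hGcont : Continuous (fun z : ℝ => (π - z) * Real.cos z ^ 2) := by fun_prop
  have hf0 : f 0 = y / 2 := by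
    simp only [hf_def]
    norm_num
    exact Real.arccos_cos (by linarith) (by linarith)
  have hfpi : f π = π / 2 := by
    simp only [hf_def]
    rw [Real.cos_pi_div_two, mul_zero, Real.arccos_zero]
  have key : (∫ x in (0:ℝ)..π, f' x • ((fun z : ℝ => (π - z) * Real.cos z ^ 2) ∘ f) x)
      = ∫ z in (y / 2)..(π / 2), (π - z) * Real.cos z ^ 2 := by
    rw [intervalIntegral.integral_comp_smul_deriv hderiv hf'cont hGcont, hf0, hfpi]
  rw [← key, ← intervalIntegral.integral_const_mul]
  apply intervalIntegral.integral_congr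
  intro x hx
  rw [Set.uIcc_of_le (le_of_lt hpi)] at hx
  obtain ⟨hx0, hxpi⟩ := hx
  rcases eq_or_lt_of_le hx0 with h | hx0
  · -- x = 0
    simp only [← h, hf'_def, Function.comp_apply, smul_eq_mul]
    norm_num
  rcases eq_or_lt_of_le hxpi with h | hxpi
  · -- x = π
    subst h
    simp only [Function.comp_apply, smul_eq_mul, hfpi]
    rw [Real.sin_pi, Real.cos_pi_div_two]
    ring
  -- interior case
  have hu0 : 0 < x / 2 := by linarith
  have hu1 : x / 2 < π / 2 := by linarith
  have hcosu : 0 < Real.cos (x / 2) := Real.cos_pos_of_mem_Ioo ⟨by linarith, hu1⟩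
  have hsinu : 0 < Real.sin (x / 2) := Real.sin_pos_of_pos_of_lt_pi hu0 (by linarith)
  have htanu : Real.tan (x / 2) = Real.sin (x / 2) / Real.cos (x / 2) :=
    Real.tan_eq_sin_div_cos (x / 2)
  have hsq : Real.sin (x / 2) ^ 2 + Real.cos (x / 2) ^ 2 = 1 := Real.sin_sq_add_cos_sq (x / 2)
  set A := Real.sqrt (1 - (c * Real.cos (x / 2)) ^ 2) with hA_def
  have hA : 0 < A := hsqrt_pos x
  have hAsq : A ^ 2 = 1 - (c * Real.cos (x / 2)) ^ 2 := by
    rw [hA_def]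
    apply Real.sq_sqrt
    have := (hw x).1; have := (hw x).2
    nlinarith
  -- Claim A : the square root in the integrand equals A / (s * cos (x/2))
  have claimA : Real.sqrt (Real.tan (x / 2) ^ 2 / s ^ 2 + 1) = A / (s * Real.cos (x / 2)) := by
    have hnum : Real.sin (x / 2) ^ 2 + s ^ 2 * Real.cos (x / 2) ^ 2
        = 1 - (c * Real.cos (x / 2)) ^ 2 := by
      linear_combination hsq + Real.cos (x / 2) ^ 2 * hsc
    have heq : Real.tan (x / 2) ^ 2 / s ^ 2 + 1 = (A / (s * Real.cos (x / 2))) ^ 2 := by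
      rw [htanu, div_pow, div_pow, hAsq, ← hnum]
      field_simp
    rw [heq, Real.sqrt_sq (by positivity)]
  -- Claim B : arctan of (sqrt * tan(y/2)) equals f x
  have hcosz : Real.cos (f x) = c * Real.cos (x / 2) := by
    rw [hf_def]
    exact Real.cos_arccos (by linarith [(hw x).1]) (by linarith [(hw x).2])
  have hsinz : Real.sin (f x) = A := by
    rw [hf_def, Real.sin_arccos, hA_def]
  have hz0 : 0 < f x := by
    rw [hf_def]
    exact Real.arccos_pos.2 (hw x).2
  have hz1 : f x < π / 2 := by
    rw [hf_def]
    exact Real.arccos_lt_pi_div_two.2 (by positivity)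
  have claimB : Real.arctan (Real.sqrt (Real.tan (x / 2) ^ 2 / s ^ 2 + 1) * Real.tan (y / 2))
      = f x := by
    rw [claimA, ht]
    have : A / (s * Real.cos (x / 2)) * (s / c) = Real.tan (f x) := by
      rw [Real.tan_eq_sin_div_cos, hsinz, hcosz]
      field_simp
    rw [this, Real.arctan_tan (by linarith) hz1]
  dsimp only
  rw [claimB, claimA, ht]
  have hsinx : Real.sin x = 2 * Real.sin (x / 2) * Real.cos (x / 2) := by
    have h2 : 2 * (x / 2) = x := by ring
    have h3 := Real.sin_two_mul (x / 2)
    rw [h2] at h3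
    exact h3
  simp only [hf'_def, Function.comp_apply, smul_eq_mul]
  rw [← hA_def, hsinx, hcosz]
  field_simp
  ring
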